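/- Let E ⊆ ℝⁿ and F ⊆ ℝᵐ be closed sets, and let P : ℝⁿ → ℝᵐ and Q : ℝᵐ → ℝⁿ be maps whose components are real polynomials, such that P(E) = F and Q(P(x)) = x for every x ∈ E. Then there exists a continuous linear operator T : S(ℝᵐ) → S(ℝⁿ) such that (Tf)(x) = f(P(x)) for every f ∈ S(ℝᵐ) and every x ∈ E; equivalently, for every p ∈ ℕ there exist q ∈ ℕ and C > 0 with ‖Tf‖_{(p,ℝⁿ)} ≤ C ‖f‖_{(q,ℝᵐ)} for all f ∈ S(ℝᵐ). -/

import Mathlib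

open Function SchwartzMap
open scoped ContDiff

/-- The `p`-th Schwartz seminorm `‖f‖_{(p)} = sup_{x, |α| ≤ p} (1+|x|)^p |∂^α f(x)|`
(with derivatives of order `j ≤ p` measured by the iterated Fréchet derivative). -/
noncomputable def snorm' {W : Type*} [NormedAddCommGroup W] [NormedSpace ℝ W]
    (p : ℕ) (f : W → ℂ) : ℝ :=
  ⨆ q : Fin (p + 1) × W, (1 + ‖q.2‖) ^ p * ‖iteratedFDeriv ℝ (q.1 : ℕ) f q.2‖

/-- A map `ℝⁿ → ℝᵐ` all of whose components are real polynomials. -/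
def IsPolyMap {n m : ℕ} (P : EuclideanSpace ℝ (Fin n) → EuclideanSpace ℝ (Fin m)) : Prop :=
  ∃ p : Fin m → MvPolynomial (Fin n) ℝ,
    ∀ (x : EuclideanSpace ℝ (Fin n)) (i : Fin m), P x i = MvPolynomial.eval (fun j => x j) (p i)

namespace MyTG

section TG
variable {E F G H : Type*} [NormedAddCommGroup E] [NormedSpace ℝ E]
  [NormedAddCommGroup F] [NormedSpace ℝ F]
  [NormedAddCommGroup G] [NormedSpace ℝ G]

theorem htg_bound0 {f : E → F} (hf : f.HasTemperateGrowth) :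
    ∃ (k : ℕ) (C : ℝ), 0 ≤ C ∧ ∀ x, ‖f x‖ ≤ C * (1 + ‖x‖) ^ k := by
  obtain ⟨k, C, hC, h⟩ := hf.norm_iteratedFDeriv_le_uniform 0
  exact ⟨k, C, hC, fun x => by simpa [norm_iteratedFDeriv_zero] using h 0 le_rfl x⟩

theorem htg_add {f g : E → F} (hf : f.HasTemperateGrowth) (hg : g.HasTemperateGrowth) :
    Function.HasTemperateGrowth (fun x => f x + g x) := by
  refine ⟨hf.1.add hg.1, fun n => ?_⟩
  obtain ⟨k₁, C₁, hC₁, h₁⟩ := hf.norm_iteratedFDeriv_le_uniform n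
  obtain ⟨k₂, C₂, hC₂, h₂⟩ := hg.norm_iteratedFDeriv_le_uniform n
  refine ⟨max k₁ k₂, C₁ + C₂, fun x => ?_⟩
  have hx : (1:ℝ) ≤ 1 + ‖x‖ := by simp [norm_nonneg]
  have e : iteratedFDeriv ℝ n (fun x => f x + g x) x
      = iteratedFDeriv ℝ n f x + iteratedFDeriv ℝ n g x :=
    iteratedFDeriv_add_apply (hf.1.of_le (mod_cast le_top)).contDiffAt (hg.1.of_le (mod_cast le_top)).contDiffAt
  calc ‖iteratedFDeriv ℝ n (fun x => f x + g x) x‖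
      ≤ ‖iteratedFDeriv ℝ n f x‖ + ‖iteratedFDeriv ℝ n g x‖ := e ▸ norm_add_le _ _
    _ ≤ C₁ * (1 + ‖x‖) ^ k₁ + C₂ * (1 + ‖x‖) ^ k₂ := add_le_add (h₁ n le_rfl x) (h₂ n le_rfl x)
    _ ≤ C₁ * (1 + ‖x‖) ^ max k₁ k₂ + C₂ * (1 + ‖x‖) ^ max k₁ k₂ :=
        add_le_add (mul_le_mul_of_nonneg_left (pow_le_pow_right₀ hx (le_max_left _ _)) hC₁)
          (mul_le_mul_of_nonneg_left (pow_le_pow_right₀ hx (le_max_right _ _)) hC₂)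
    _ = (C₁ + C₂) * (1 + ‖x‖) ^ max k₁ k₂ := by ring

theorem htg_clm_comp (L : F →L[ℝ] G) {f : E → F} (hf : f.HasTemperateGrowth) :
    Function.HasTemperateGrowth (fun x => L (f x)) := by
  refine ⟨L.contDiff.comp hf.1, fun n => ?_⟩
  obtain ⟨k, C, hC, h⟩ := hf.norm_iteratedFDeriv_le_uniform n
  refine ⟨k, ‖L‖ * C, fun x => ?_⟩
  have e : iteratedFDeriv ℝ n (L ∘ f) x
      = L.compContinuousMultilinearMap (iteratedFDeriv ℝ n f x) :=
    L.iteratedFDeriv_comp_left (x := x) hf.1.contDiffAt (mod_cast le_top)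
  calc ‖iteratedFDeriv ℝ n (fun x => L (f x)) x‖
      = ‖L.compContinuousMultilinearMap (iteratedFDeriv ℝ n f x)‖ := by
        rw [← e]; rfl
    _ ≤ ‖L‖ * ‖iteratedFDeriv ℝ n f x‖ := L.norm_compContinuousMultilinearMap_le _
    _ ≤ ‖L‖ * (C * (1 + ‖x‖) ^ k) := by gcongr; exact h n le_rfl x
    _ = ‖L‖ * C * (1 + ‖x‖) ^ k := by ring

theorem htg_mul {f g : E → ℝ} (hf : f.HasTemperateGrowth) (hg : g.HasTemperateGrowth) :
    Function.HasTemperateGrowth (fun x => f x * g x) := by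
  refine ⟨hf.1.mul hg.1, fun n => ?_⟩
  obtain ⟨k₁, C₁, hC₁, h₁⟩ := hf.norm_iteratedFDeriv_le_uniform n
  obtain ⟨k₂, C₂, hC₂, h₂⟩ := hg.norm_iteratedFDeriv_le_uniform n
  refine ⟨k₁ + k₂, 2 ^ n * (C₁ * C₂), fun x => ?_⟩
  have key := norm_iteratedFDeriv_smul_le (𝕜 := ℝ) (𝕜' := ℝ) (F := ℝ)
    hf.1 hg.1 x (n := n) (mod_cast le_top)
  refine key.trans ?_
  have : ∀ i ∈ Finset.range (n + 1),
      (n.choose i : ℝ) * ‖iteratedFDeriv ℝ i f x‖ * ‖iteratedFDeriv ℝ (n - i) g x‖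
        ≤ (n.choose i : ℝ) * (C₁ * C₂ * (1 + ‖x‖) ^ (k₁ + k₂)) := by
    intro i hi
    rw [Finset.mem_range_succ_iff] at hi
    have := mul_le_mul (h₁ i hi x) (h₂ (n - i) (Nat.sub_le _ _) x)
      (norm_nonneg _) (by positivity)
    calc (n.choose i : ℝ) * ‖iteratedFDeriv ℝ i f x‖ * ‖iteratedFDeriv ℝ (n - i) g x‖
        ≤ (n.choose i : ℝ) * (C₁ * (1 + ‖x‖) ^ k₁ * (C₂ * (1 + ‖x‖) ^ k₂)) := by
          rw [mul_assoc]; gcongr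
      _ = (n.choose i : ℝ) * (C₁ * C₂ * (1 + ‖x‖) ^ (k₁ + k₂)) := by ring
  refine (Finset.sum_le_sum this).trans ?_
  rw [← Finset.sum_mul]
  have hsum : (∑ i ∈ Finset.range (n + 1), (n.choose i : ℝ)) = 2 ^ n := by
    exact_mod_cast Nat.sum_range_choose n
  rw [hsum]
  exact le_of_eq (by ring)

theorem htg_neg {f : E → F} (hf : f.HasTemperateGrowth) :
    Function.HasTemperateGrowth (fun x => -f x) := by
  simpa using htg_clm_comp (-(ContinuousLinearMap.id ℝ F)) hf

theorem htg_sub {f g : E → F} (hf : f.HasTemperateGrowth) (hg : g.HasTemperateGrowth) :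
    Function.HasTemperateGrowth (fun x => f x - g x) := by
  simpa [sub_eq_add_neg] using htg_add hf (htg_neg hg)

theorem htg_pair {f : E → F} {g : E → G} (hf : f.HasTemperateGrowth)
    (hg : g.HasTemperateGrowth) :
    Function.HasTemperateGrowth (fun x => (f x, g x)) := by
  have : (fun x => (f x, g x))
      = fun x => (ContinuousLinearMap.inl ℝ F G) (f x) + (ContinuousLinearMap.inr ℝ F G) (g x) := by
    funext x; simp [Prod.ext_iff]
  rw [this]
  exact htg_add (htg_clm_comp _ hf) (htg_clm_comp _ hg)

theorem htg_sum {ι : Type*} (s : Finset ι) (f : ι → E → F)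
    (hf : ∀ i ∈ s, (f i).HasTemperateGrowth) :
    Function.HasTemperateGrowth (fun x => ∑ i ∈ s, f i x) := by
  classical
  induction s using Finset.induction_on with
  | empty => simpa using Function.HasTemperateGrowth.zero
  | insert a s hni ih =>
    simp only [Finset.sum_insert hni]
    exact htg_add (hf a (Finset.mem_insert_self a s))
      (ih fun i hi => hf i (Finset.mem_insert_of_mem hi))

end TG

theorem htg_coord {n : ℕ} (i : Fin n) :
    Function.HasTemperateGrowth (fun x : EuclideanSpace ℝ (Fin n) => x i) :=
  (PiLp.proj (𝕜 := ℝ) 2 (fun _ : Fin n => ℝ) i).hasTemperateGrowth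

theorem htg_poly {n : ℕ} (p : MvPolynomial (Fin n) ℝ) :
    Function.HasTemperateGrowth
      (fun x : EuclideanSpace ℝ (Fin n) => MvPolynomial.eval (fun j => x j) p) := by
  induction p using MvPolynomial.induction_on with
  | C a => simpa using Function.HasTemperateGrowth.const a
  | add p q hp hq =>
    simpa [map_add] using htg_add hp hq
  | mul_X p i hp =>
    simp only [map_mul, MvPolynomial.eval_X]
    exact htg_mul hp (htg_coord i)

theorem aeval_eq_eval {n : ℕ} (f : Fin n → ℝ) (p : MvPolynomial (Fin n) ℝ) :
    MvPolynomial.aeval f p = MvPolynomial.eval f p := by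
  rw [← MvPolynomial.coe_aeval_eq_eval]; rfl

theorem IsPolyMap.comp {n m l : ℕ} {P : EuclideanSpace ℝ (Fin n) → EuclideanSpace ℝ (Fin m)}
    {Q : EuclideanSpace ℝ (Fin m) → EuclideanSpace ℝ (Fin l)}
    (hQ : IsPolyMap Q) (hP : IsPolyMap P) : IsPolyMap (fun x => Q (P x)) := by
  obtain ⟨p, hp⟩ := hP
  obtain ⟨q, hq⟩ := hQ
  refine ⟨fun i => MvPolynomial.bind₁ p (q i), fun x i => ?_⟩
  show Q (P x) i = _
  rw [hq (P x) i, ← aeval_eq_eval, ← aeval_eq_eval, MvPolynomial.aeval_bind₁]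
  have : (fun j => P x j) = fun j => MvPolynomial.aeval (fun j => x j) (p j) := by
    funext j
    rw [aeval_eq_eval, ← hp x j]
  rw [this]

theorem htg_polyMap {n m : ℕ} {P : EuclideanSpace ℝ (Fin n) → EuclideanSpace ℝ (Fin m)}
    (hP : IsPolyMap P) : Function.HasTemperateGrowth P := by
  obtain ⟨p, hp⟩ := hP
  have key : P = fun x => ∑ i : Fin m,
      (MvPolynomial.eval (fun j => x j) (p i)) • EuclideanSpace.single i (1:ℝ) := by
    funext x
    apply PiLp.ext
    intro i
    rw [hp x i]
    have : (∑ j : Fin m,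
        (MvPolynomial.eval (fun j => x j) (p j)) • EuclideanSpace.single j (1:ℝ)) i
        = ∑ j : Fin m, (MvPolynomial.eval (fun j => x j) (p j)) * (EuclideanSpace.single j (1:ℝ) i) := by
      rw [WithLp.ofLp_sum, Finset.sum_apply]
      rfl
    rw [this]
    simp [EuclideanSpace.single_apply]
  rw [key]
  exact htg_sum Finset.univ _ fun i _ =>
    htg_clm_comp (ContinuousLinearMap.toSpanSingleton ℝ (EuclideanSpace.single i (1:ℝ)))
      (htg_poly (p i))

noncomputable def rho : ContDiffBump (0:ℝ) := ⟨1, 2, one_pos, one_lt_two⟩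

theorem rho_zero : rho (0:ℝ) = 1 :=
  rho.one_of_mem_closedBall (by simp [rho, Metric.mem_closedBall])

theorem rho_bound (k i : ℕ) :
    ∃ C, 0 ≤ C ∧ ∀ t : ℝ, (1 + ‖t‖) ^ k * ‖iteratedFDeriv ℝ i (⇑rho) t‖ ≤ C := by
  have hcont : Continuous fun t : ℝ => (1 + ‖t‖) ^ k * ‖iteratedFDeriv ℝ i (⇑rho) t‖ :=
    (continuous_const.add continuous_norm).pow k |>.mul
      ((rho.contDiff (n := (⊤ : ℕ∞))).continuous_iteratedFDeriv (mod_cast le_top)).norm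
  have hsupp : HasCompactSupport fun t : ℝ => (1 + ‖t‖) ^ k * ‖iteratedFDeriv ℝ i (⇑rho) t‖ :=
    ((rho.hasCompactSupport.iteratedFDeriv i).norm).mul_left
  obtain ⟨t₀, ht₀⟩ := hcont.exists_forall_ge_of_hasCompactSupport hsupp
  exact ⟨max 0 _, le_max_left _ _, fun t => (ht₀ t).trans (le_max_right _ _)⟩

theorem rho_bound' (k nn : ℕ) :
    ∃ C, 0 ≤ C ∧ ∀ i ≤ nn, ∀ t : ℝ,
      (1 + ‖t‖) ^ k * ‖iteratedFDeriv ℝ i (⇑rho) t‖ ≤ C := by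
  choose C hC0 hC using rho_bound k
  refine ⟨∑ i ∈ Finset.range (nn + 1), C i, Finset.sum_nonneg fun i _ => hC0 i, fun i hi t => ?_⟩
  refine (hC i t).trans ?_
  exact Finset.single_le_sum (fun j _ => hC0 j) (Finset.mem_range_succ_iff.2 hi)

section Tensor

variable {E : Type*} [NormedAddCommGroup E] [NormedSpace ℝ E]

/-- The tensor map `f ↦ (z ↦ ρ z.2 • f z.1)` as a CLM from `𝓢(E, ℂ)` to `𝓢(E × ℝ, ℂ)`. -/
noncomputable def tensorCLM : 𝓢(E, ℂ) →L[ℂ] 𝓢(E × ℝ, ℂ) := by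
  refine mkCLM (fun f (z : E × ℝ) => rho z.2 • f z.1)
    (fun f g z => by simp [smul_add])
    (fun a f z => by
      simp only [SchwartzMap.smul_apply]; exact smul_comm (rho z.2) a (f z.1))
    (fun f => ((rho.contDiff.comp contDiff_snd).smul (f.smooth'.comp contDiff_fst))) ?_
  rintro ⟨k, nn⟩
  obtain ⟨Cρ, hCρ0, hCρ⟩ := rho_bound' k nn
  refine ⟨Finset.Iic (k, nn), 2 ^ nn * (Cρ * 2 ^ k), by positivity, fun f z => ?_⟩
  have hu : ContDiff ℝ ∞ (fun z : E × ℝ => rho z.2) := rho.contDiff.comp contDiff_snd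
  have hv : ContDiff ℝ ∞ (fun z : E × ℝ => f z.1) := f.smooth'.comp contDiff_fst
  have hub : ∀ i ≤ nn, ∀ z : E × ℝ,
      ‖iteratedFDeriv ℝ i (fun z : E × ℝ => rho z.2) z‖ ≤ ‖iteratedFDeriv ℝ i (⇑rho) z.2‖ := by
    intro i hi z
    have e : iteratedFDeriv ℝ i ((⇑rho) ∘ (ContinuousLinearMap.snd ℝ E ℝ)) z
        = (iteratedFDeriv ℝ i (⇑rho) z.2).compContinuousLinearMap
            fun _ => ContinuousLinearMap.snd ℝ E ℝ :=
      (ContinuousLinearMap.snd ℝ E ℝ).iteratedFDeriv_comp_right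
        (rho.contDiff (n := (⊤ : ℕ∞))) z (mod_cast le_top)
    calc ‖iteratedFDeriv ℝ i (fun z : E × ℝ => rho z.2) z‖
        = ‖(iteratedFDeriv ℝ i (⇑rho) z.2).compContinuousLinearMap
            fun _ => ContinuousLinearMap.snd ℝ E ℝ‖ := by rw [← e]; rfl
      _ ≤ ‖iteratedFDeriv ℝ i (⇑rho) z.2‖ *
            ∏ _j : Fin i, ‖ContinuousLinearMap.snd ℝ E ℝ‖ :=
          (iteratedFDeriv ℝ i (⇑rho) z.2).norm_compContinuousLinearMap_le _
      _ ≤ ‖iteratedFDeriv ℝ i (⇑rho) z.2‖ * 1 := by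
          refine mul_le_mul_of_nonneg_left ?_ (norm_nonneg _)
          exact Finset.prod_le_one (fun _ _ => norm_nonneg _)
            (fun _ _ => ContinuousLinearMap.norm_snd_le ℝ E ℝ)
      _ = _ := mul_one _
  have hvb : ∀ i ≤ nn, ∀ z : E × ℝ,
      ‖iteratedFDeriv ℝ i (fun z : E × ℝ => f z.1) z‖ ≤ ‖iteratedFDeriv ℝ i (⇑f) z.1‖ := by
    intro i hi z
    have e : iteratedFDeriv ℝ i ((⇑f) ∘ (ContinuousLinearMap.fst ℝ E ℝ)) z
        = (iteratedFDeriv ℝ i (⇑f) z.1).compContinuousLinearMap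
            fun _ => ContinuousLinearMap.fst ℝ E ℝ :=
      (ContinuousLinearMap.fst ℝ E ℝ).iteratedFDeriv_comp_right f.smooth' z (mod_cast le_top)
    calc ‖iteratedFDeriv ℝ i (fun z : E × ℝ => f z.1) z‖
        = ‖(iteratedFDeriv ℝ i (⇑f) z.1).compContinuousLinearMap
            fun _ => ContinuousLinearMap.fst ℝ E ℝ‖ := by rw [← e]; rfl
      _ ≤ ‖iteratedFDeriv ℝ i (⇑f) z.1‖ * ∏ _j : Fin i, ‖ContinuousLinearMap.fst ℝ E ℝ‖ :=
          (iteratedFDeriv ℝ i (⇑f) z.1).norm_compContinuousLinearMap_le _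
      _ ≤ ‖iteratedFDeriv ℝ i (⇑f) z.1‖ * 1 := by
          refine mul_le_mul_of_nonneg_left ?_ (norm_nonneg _)
          exact Finset.prod_le_one (fun _ _ => norm_nonneg _)
            (fun _ _ => ContinuousLinearMap.norm_fst_le ℝ E ℝ)
      _ = _ := mul_one _
  have key := norm_iteratedFDeriv_smul_le (𝕜 := ℝ) (𝕜' := ℝ) (F := ℂ) hu hv z
    (n := nn) (mod_cast le_top)
  have hz : ‖z‖ ^ k ≤ (1 + ‖z.1‖) ^ k * (1 + ‖z.2‖) ^ k := by
    rw [← mul_pow]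
    refine pow_le_pow_left₀ (norm_nonneg _) ?_ k
    have h1 : ‖z‖ ≤ ‖z.1‖ + ‖z.2‖ := by
      rw [Prod.norm_def]
      exact max_le (le_add_of_nonneg_right (norm_nonneg _))
        (le_add_of_nonneg_left (norm_nonneg _))
    nlinarith [norm_nonneg z.1, norm_nonneg z.2]
  calc ‖z‖ ^ k * ‖iteratedFDeriv ℝ nn (fun z : E × ℝ => rho z.2 • f z.1) z‖
      ≤ ((1 + ‖z.1‖) ^ k * (1 + ‖z.2‖) ^ k) * (∑ i ∈ Finset.range (nn + 1),
          (nn.choose i : ℝ) * ‖iteratedFDeriv ℝ i (fun z : E × ℝ => rho z.2) z‖ *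
            ‖iteratedFDeriv ℝ (nn - i) (fun z : E × ℝ => f z.1) z‖) := by
        exact mul_le_mul hz key (norm_nonneg _) (by positivity)
    _ ≤ ∑ i ∈ Finset.range (nn + 1), (nn.choose i : ℝ) *
          (Cρ * (2 ^ k * ((Finset.Iic (k, nn)).sup (schwartzSeminormFamily ℂ E ℂ)) f)) := by
        rw [Finset.mul_sum]
        refine Finset.sum_le_sum fun i hi => ?_
        rw [Finset.mem_range_succ_iff] at hi
        have b1 : (1 + ‖z.2‖) ^ k * ‖iteratedFDeriv ℝ i (fun z : E × ℝ => rho z.2) z‖ ≤ Cρ :=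
          le_trans (mul_le_mul_of_nonneg_left (hub i hi z) (by positivity)) (hCρ i hi z.2)
        have b2 : (1 + ‖z.1‖) ^ k * ‖iteratedFDeriv ℝ (nn - i) (fun z : E × ℝ => f z.1) z‖
            ≤ 2 ^ k * ((Finset.Iic (k, nn)).sup (schwartzSeminormFamily ℂ E ℂ)) f := by
          have b2' := one_add_le_sup_seminorm_apply (𝕜 := ℂ) (m := (k, nn)) (k := k)
            (n := nn - i) le_rfl (Nat.sub_le nn i) f z.1
          exact le_trans (mul_le_mul_of_nonneg_left (hvb (nn - i) (Nat.sub_le nn i) z)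
            (by positivity)) b2'
        calc ((1 + ‖z.1‖) ^ k * (1 + ‖z.2‖) ^ k) * ((nn.choose i : ℝ) *
              ‖iteratedFDeriv ℝ i (fun z : E × ℝ => rho z.2) z‖ *
              ‖iteratedFDeriv ℝ (nn - i) (fun z : E × ℝ => f z.1) z‖)
            = (nn.choose i : ℝ) *
              (((1 + ‖z.2‖) ^ k * ‖iteratedFDeriv ℝ i (fun z : E × ℝ => rho z.2) z‖) *
               ((1 + ‖z.1‖) ^ k * ‖iteratedFDeriv ℝ (nn - i) (fun z : E × ℝ => f z.1) z‖)) := by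
              ring
          _ ≤ (nn.choose i : ℝ) * (Cρ * (2 ^ k *
                ((Finset.Iic (k, nn)).sup (schwartzSeminormFamily ℂ E ℂ)) f)) := by
              refine mul_le_mul_of_nonneg_left ?_ (Nat.cast_nonneg _)
              exact mul_le_mul b1 b2 (by positivity) hCρ0
    _ = (∑ i ∈ Finset.range (nn + 1), (nn.choose i : ℝ)) *
          (Cρ * (2 ^ k * ((Finset.Iic (k, nn)).sup (schwartzSeminormFamily ℂ E ℂ)) f)) := by
        rw [Finset.sum_mul]
    _ = 2 ^ nn * (Cρ * 2 ^ k) * ((Finset.Iic (k, nn)).sup (schwartzSeminormFamily ℂ E ℂ)) f := by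
        have hsum : (∑ i ∈ Finset.range (nn + 1), (nn.choose i : ℝ)) = 2 ^ nn := by
          exact_mod_cast Nat.sum_range_choose nn
        rw [hsum]; ring

theorem tensorCLM_apply (f : 𝓢(E, ℂ)) (z : E × ℝ) :
    (tensorCLM f) z = rho z.2 • f z.1 := rfl

end Tensor

section Snorm
variable {V : Type*} [NormedAddCommGroup V] [NormedSpace ℝ V]

theorem snorm'_le_schwartz (p : ℕ) (f : 𝓢(V, ℂ)) :
    snorm' p ⇑f ≤ 2 ^ p * ((Finset.Iic (p, p)).sup (schwartzSeminormFamily ℂ V ℂ)) f := by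
  refine Real.iSup_le (fun q => ?_) (by positivity)
  exact one_add_le_sup_seminorm_apply (𝕜 := ℂ) (m := (p, p)) le_rfl
    (Nat.lt_succ_iff.mp q.1.isLt) f q.2

theorem snorm'_nonneg (p : ℕ) (f : V → ℂ) : 0 ≤ snorm' p f :=
  Real.iSup_nonneg fun q => by positivity

theorem schwartz_le_snorm' {k nn q : ℕ} (hk : k ≤ q) (hn : nn ≤ q) (f : 𝓢(V, ℂ)) :
    SchwartzMap.seminorm ℂ k nn f ≤ snorm' q ⇑f := by
  refine SchwartzMap.seminorm_le_bound ℂ k nn f (snorm'_nonneg q ⇑f) fun x => ?_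
  have hb : BddAbove (Set.range fun w : Fin (q + 1) × V =>
      (1 + ‖w.2‖) ^ q * ‖iteratedFDeriv ℝ (w.1 : ℕ) (⇑f) w.2‖) := by
    refine ⟨2 ^ q * ((Finset.Iic (q, q)).sup (schwartzSeminormFamily ℂ V ℂ)) f, ?_⟩
    rintro y ⟨w, rfl⟩
    exact one_add_le_sup_seminorm_apply (𝕜 := ℂ) (m := (q, q)) le_rfl
      (Nat.lt_succ_iff.mp w.1.isLt) f w.2
  have step : (1 + ‖x‖) ^ q * ‖iteratedFDeriv ℝ nn (⇑f) x‖ ≤ snorm' q ⇑f := by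
    have := le_ciSup hb (⟨⟨nn, Nat.lt_succ_of_le hn⟩, x⟩ : Fin (q + 1) × V)
    exact this
  refine le_trans ?_ step
  refine mul_le_mul_of_nonneg_right ?_ (norm_nonneg _)
  calc ‖x‖ ^ k ≤ (1 + ‖x‖) ^ k :=
        pow_le_pow_left₀ (norm_nonneg _) (by linarith [norm_nonneg x]) k
    _ ≤ (1 + ‖x‖) ^ q := pow_le_pow_right₀ (by linarith [norm_nonneg x]) hk

end Snorm
end MyTG

open MyTG

/-- Let `E ⊆ ℝⁿ`, `F ⊆ ℝᵐ` be closed, `P, Q` polynomial maps with `P(E) = F` and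
`Q ∘ P = id` on `E`. Then there is a continuous linear operator `T : 𝓢(ℝᵐ) → 𝓢(ℝⁿ)` with
`Tf = f ∘ P` on `E`; moreover, for every `p` there are `q` and `C > 0` with
`‖Tf‖_{(p,ℝⁿ)} ≤ C ‖f‖_{(q,ℝᵐ)}` for all `f`. -/
theorem stmt0 {n m : ℕ} (E : Set (EuclideanSpace ℝ (Fin n))) (F : Set (EuclideanSpace ℝ (Fin m)))
    (hE : IsClosed E) (hF : IsClosed F)
    (P : EuclideanSpace ℝ (Fin n) → EuclideanSpace ℝ (Fin m))
    (Q : EuclideanSpace ℝ (Fin m) → EuclideanSpace ℝ (Fin n))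
    (hP : IsPolyMap P) (hQ : IsPolyMap Q)
    (hPE : P '' E = F) (hQP : ∀ x ∈ E, Q (P x) = x) :
    ∃ T : SchwartzMap (EuclideanSpace ℝ (Fin m)) ℂ →L[ℂ]
        SchwartzMap (EuclideanSpace ℝ (Fin n)) ℂ,
      (∀ (f : SchwartzMap (EuclideanSpace ℝ (Fin m)) ℂ) (x : EuclideanSpace ℝ (Fin n)),
        x ∈ E → T f x = f (P x)) ∧
      ∀ p : ℕ, ∃ (q : ℕ) (C : ℝ), 0 < C ∧
        ∀ f : SchwartzMap (EuclideanSpace ℝ (Fin m)) ℂ,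
          snorm' p (⇑(T f)) ≤ C * snorm' q ⇑f := by
  classical
  have htgP : Function.HasTemperateGrowth P := htg_polyMap hP
  have hQPmap : IsPolyMap (fun x => Q (P x)) := IsPolyMap.comp hQ hP
  have htgQP : Function.HasTemperateGrowth (fun x => Q (P x)) := htg_polyMap hQPmap
  have htgQ : Function.HasTemperateGrowth Q := htg_polyMap hQ
  -- the defect function
  set R : (EuclideanSpace ℝ (Fin n)) → (EuclideanSpace ℝ (Fin n)) := fun x => x - Q (P x) with hRdef
  have htgR : Function.HasTemperateGrowth R := by
    have hid : Function.HasTemperateGrowth (fun x : (EuclideanSpace ℝ (Fin n)) => x) := by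
      exact (ContinuousLinearMap.id ℝ (EuclideanSpace ℝ (Fin n))).hasTemperateGrowth
    exact htg_sub hid htgQP
  set Dfun : (EuclideanSpace ℝ (Fin n)) → ℝ := fun x => ∑ i : Fin n, (R x i) * (R x i) with hDdef
  have htgD : Function.HasTemperateGrowth Dfun := by
    refine htg_sum Finset.univ _ fun i _ => htg_mul ?_ ?_ <;>
      exact htg_clm_comp (PiLp.proj (𝕜 := ℝ) 2 (fun _ : Fin n => ℝ) i) htgR
  have hDsq : ∀ x, Dfun x = ‖R x‖ ^ 2 := by
    intro x
    have : ‖R x‖ ^ 2 = ∑ i : Fin n, ‖R x i‖ ^ 2 := by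
      rw [EuclideanSpace.norm_eq, Real.sq_sqrt (by positivity)]
    rw [this, hDdef]
    refine Finset.sum_congr rfl fun i _ => ?_
    rw [Real.norm_eq_abs, sq_abs, sq]
  have hDnonneg : ∀ x, 0 ≤ Dfun x := fun x => by rw [hDsq]; positivity
  have hD0 : ∀ x ∈ E, Dfun x = 0 := by
    intro x hx
    rw [hDsq, hRdef]
    simp [hQP x hx]
  -- the combined map
  set g : (EuclideanSpace ℝ (Fin n)) → (EuclideanSpace ℝ (Fin m)) × ℝ := fun x => (P x, Dfun x) with hgdef
  have htgg : Function.HasTemperateGrowth g := htg_pair htgP htgD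
  have hg_upper : ∃ (k : ℕ) (C : ℝ), ∀ x, ‖x‖ ≤ C * (1 + ‖g x‖) ^ k := by
    obtain ⟨k₀, C₀, hC₀, hQb⟩ := htg_bound0 htgQ
    refine ⟨k₀ + 1, 1 + C₀, fun x => ?_⟩
    have hgx1 : (1:ℝ) ≤ 1 + ‖g x‖ := by simp [norm_nonneg]
    have hD_le : Dfun x ≤ ‖g x‖ := by
      have : Dfun x ≤ ‖Dfun x‖ := le_abs_self _
      exact this.trans (norm_snd_le (g x))
    have hP_le : ‖P x‖ ≤ ‖g x‖ := norm_fst_le (g x)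
    have h1 : ‖R x‖ ≤ 1 + Dfun x := by
      rw [hDsq x]
      nlinarith [norm_nonneg (R x)]
    have h2 : ‖Q (P x)‖ ≤ C₀ * (1 + ‖g x‖) ^ k₀ := by
      refine (hQb (P x)).trans ?_
      gcongr
    have h3 : ‖x‖ ≤ ‖R x‖ + ‖Q (P x)‖ := by
      have hx' : R x + Q (P x) = x := by
        show x - Q (P x) + Q (P x) = x
        abel
      calc ‖x‖ = ‖R x + Q (P x)‖ := by rw [hx']
        _ ≤ ‖R x‖ + ‖Q (P x)‖ := norm_add_le _ _
    have h4 : (1:ℝ) + ‖g x‖ ≤ (1 + ‖g x‖) ^ (k₀ + 1) :=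
      le_self_pow₀ hgx1 (Nat.succ_ne_zero k₀)
    have h5 : (1 + ‖g x‖) ^ k₀ ≤ (1 + ‖g x‖) ^ (k₀ + 1) :=
      pow_le_pow_right₀ hgx1 (Nat.le_succ k₀)
    calc ‖x‖ ≤ ‖R x‖ + ‖Q (P x)‖ := h3
      _ ≤ (1 + Dfun x) + C₀ * (1 + ‖g x‖) ^ k₀ := add_le_add h1 h2
      _ ≤ (1 + ‖g x‖) + C₀ * (1 + ‖g x‖) ^ k₀ := by linarith
      _ ≤ (1 + ‖g x‖) ^ (k₀ + 1) + C₀ * (1 + ‖g x‖) ^ (k₀ + 1) := by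
          refine add_le_add h4 ?_
          exact mul_le_mul_of_nonneg_left h5 hC₀
      _ = (1 + C₀) * (1 + ‖g x‖) ^ (k₀ + 1) := by ring
  -- the operator
  set T : 𝓢((EuclideanSpace ℝ (Fin m)), ℂ) →L[ℂ] 𝓢((EuclideanSpace ℝ (Fin n)), ℂ) :=
    (SchwartzMap.compCLM (𝕜 := ℂ) htgg hg_upper).comp tensorCLM with hTdef
  have hTapp : ∀ (f : 𝓢((EuclideanSpace ℝ (Fin m)), ℂ)) (x : (EuclideanSpace ℝ (Fin n))), T f x = rho (Dfun x) • f (P x) := fun f x => rfl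
  refine ⟨T, ?_, ?_⟩
  · intro f x hx
    rw [hTapp f x, hD0 x hx, rho_zero, one_smul]
  · intro p
    -- continuity bounds for each seminorm composed with T
    have hbound : ∀ i : ℕ × ℕ, ∃ (s : Finset (ℕ × ℕ)) (C : ℝ), 0 ≤ C ∧
        ∀ f : 𝓢((EuclideanSpace ℝ (Fin m)), ℂ), schwartzSeminormFamily ℂ (EuclideanSpace ℝ (Fin n)) ℂ i (T f)
          ≤ C * (s.sup (schwartzSeminormFamily ℂ (EuclideanSpace ℝ (Fin m)) ℂ)) f := by
      intro i
      have hcont : Continuous fun f : 𝓢((EuclideanSpace ℝ (Fin m)), ℂ) =>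
          ((schwartzSeminormFamily ℂ (EuclideanSpace ℝ (Fin n)) ℂ i).comp T.toLinearMap) f := by
        have h1 : Continuous (schwartzSeminormFamily ℂ (EuclideanSpace ℝ (Fin n)) ℂ i) :=
          (schwartz_withSeminorms ℂ (EuclideanSpace ℝ (Fin n)) ℂ).continuous_seminorm i
        exact h1.comp T.continuous
      obtain ⟨s, C, hCne, hle⟩ := Seminorm.bound_of_continuous (schwartz_withSeminorms ℂ (EuclideanSpace ℝ (Fin m)) ℂ)
        ((schwartzSeminormFamily ℂ (EuclideanSpace ℝ (Fin n)) ℂ i).comp T.toLinearMap) hcont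
      refine ⟨s, C, C.coe_nonneg, fun f => ?_⟩
      have := hle f
      simpa [Seminorm.smul_apply, NNReal.smul_def] using this
    choose sfun Cfun hCfun hfun using hbound
    set q : ℕ := (Finset.Iic (p, p)).sup fun i => (sfun i).sup fun j => max j.1 j.2 with hqdef
    set Ctot : ℝ := 1 + ∑ i ∈ Finset.Iic (p, p), Cfun i with hCtotdef
    have hCtot_pos : 0 < Ctot := by
      have : 0 ≤ ∑ i ∈ Finset.Iic (p, p), Cfun i :=
        Finset.sum_nonneg fun i _ => hCfun i
      rw [hCtotdef]; linarith
    refine ⟨q, 2 ^ p * Ctot, mul_pos (by positivity) hCtot_pos, fun f => ?_⟩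
    have step1 : snorm' p (⇑(T f))
        ≤ 2 ^ p * ((Finset.Iic (p, p)).sup (schwartzSeminormFamily ℂ (EuclideanSpace ℝ (Fin n)) ℂ)) (T f) :=
      snorm'_le_schwartz p (T f)
    have step2 : ((Finset.Iic (p, p)).sup (schwartzSeminormFamily ℂ (EuclideanSpace ℝ (Fin n)) ℂ)) (T f)
        ≤ Ctot * snorm' q ⇑f := by
      refine Seminorm.finset_sup_apply_le (mul_nonneg hCtot_pos.le (snorm'_nonneg _ _)) fun i hi => ?_
      have h1 : schwartzSeminormFamily ℂ (EuclideanSpace ℝ (Fin n)) ℂ i (T f)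
          ≤ Cfun i * ((sfun i).sup (schwartzSeminormFamily ℂ (EuclideanSpace ℝ (Fin m)) ℂ)) f := hfun i f
      have h2 : ((sfun i).sup (schwartzSeminormFamily ℂ (EuclideanSpace ℝ (Fin m)) ℂ)) f ≤ snorm' q ⇑f := by
        refine Seminorm.finset_sup_apply_le (snorm'_nonneg q ⇑f) fun j hj => ?_
        have hj1 : max j.1 j.2 ≤ q := by
          refine le_trans (Finset.le_sup (f := fun j => max j.1 j.2) hj) ?_
          exact Finset.le_sup (f := fun i => (sfun i).sup fun j => max j.1 j.2) hi
        exact schwartz_le_snorm' (le_trans (le_max_left _ _) hj1)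
          (le_trans (le_max_right _ _) hj1) f
      have h3 : Cfun i ≤ Ctot := by
        rw [hCtotdef]
        have : Cfun i ≤ ∑ i ∈ Finset.Iic (p, p), Cfun i :=
          Finset.single_le_sum (fun i _ => hCfun i) hi
        linarith
      calc schwartzSeminormFamily ℂ (EuclideanSpace ℝ (Fin n)) ℂ i (T f)
          ≤ Cfun i * ((sfun i).sup (schwartzSeminormFamily ℂ (EuclideanSpace ℝ (Fin m)) ℂ)) f := h1
        _ ≤ Cfun i * snorm' q ⇑f := mul_le_mul_of_nonneg_left h2 (hCfun i)
        _ ≤ Ctot * snorm' q ⇑f := mul_le_mul_of_nonneg_right h3 (snorm'_nonneg q ⇑f)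
    calc snorm' p (⇑(T f))
        ≤ 2 ^ p * ((Finset.Iic (p, p)).sup (schwartzSeminormFamily ℂ (EuclideanSpace ℝ (Fin n)) ℂ)) (T f) := step1
      _ ≤ 2 ^ p * (Ctot * snorm' q ⇑f) := by
          refine mul_le_mul_of_nonneg_left step2 (by positivity)
      _ = 2 ^ p * Ctot * snorm' q ⇑f := by ring
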